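/- Let 𝒜 be the n-dimensional abelian filiform LSA with e_i e_j = e_{i+j} (zero if i+j > n) and the Hessian-type inner product ⟨e_i,e_j⟩ = δ_{i+j,n+1}. Then every derivation B of 𝒜 that is an infinitesimal isometry (satisfying ⟨Ba,b⟩ + ⟨a,Bb⟩ = 0 for all a,b) is zero, and the space of infinitesimal-similarity derivations (satisfying ⟨Ba,b⟩ + ⟨a,Bb⟩ = (2 tr B / n)⟨a,b⟩) is one-dimensional, spanned by B₁ with B₁(e_j) = j·e_j. -/
import Mathlib


/-- The product of the `n`-dimensional abelian filiform LSA `ℝ[t]·t/(t^{n+1})`. -/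
def filiformMul (n : ℕ) (x y : Fin n → ℝ) : Fin n → ℝ :=
  fun k => ∑ i : Fin n, ∑ j : Fin n,
    if (i : ℕ) + (j : ℕ) + 1 = (k : ℕ) then x i * y j else 0

/-- The Hessian-type inner product `⟨e_i, e_j⟩ = δ_{i+j,n+1}` on the filiform LSA. -/
def filiformForm (n : ℕ) (x y : Fin n → ℝ) : ℝ :=
  ∑ i : Fin n, ∑ j : Fin n,
    if (i : ℕ) + (j : ℕ) + 1 = n then x i * y j else 0

-- master form lemma
lemma form_eq (n : ℕ) (x y : Fin n → ℝ) :
    filiformForm n x y = ∑ i : Fin n, x i * y (Fin.rev i) := by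
  unfold filiformForm
  refine Finset.sum_congr rfl fun i _ => ?_
  rw [Finset.sum_eq_single (Fin.rev i)]
  · rw [if_pos]
    have := i.isLt
    simp [Fin.val_rev]; omega
  · intro j _ hj
    rw [if_neg]
    intro h
    apply hj
    have := i.isLt
    apply Fin.ext
    simp [Fin.val_rev]; omega
  · intro h; exact absurd (Finset.mem_univ _) h

-- right mult by single
lemma mul_single_right (n : ℕ) (x : Fin n → ℝ) (j : Fin n) (m : Fin n) :
    (filiformMul n x (Pi.single j 1)) m =
      if h : (j : ℕ) + 1 ≤ (m : ℕ) then x ⟨(m : ℕ) - (j : ℕ) - 1, by omega⟩ else 0 := by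
  unfold filiformMul
  have step : ∀ i : Fin n, (∑ j' : Fin n,
      if (i : ℕ) + (j' : ℕ) + 1 = (m : ℕ) then x i * (Pi.single j 1 : Fin n → ℝ) j' else 0)
      = if (i : ℕ) + (j : ℕ) + 1 = (m : ℕ) then x i else 0 := by
    intro i
    rw [Finset.sum_eq_single j]
    · simp [Pi.single_apply]
    · intro j' _ hj'
      simp [Pi.single_apply, hj']
    · intro h; exact absurd (Finset.mem_univ _) h
  simp only [step]
  split_ifs with h
  · rw [Finset.sum_eq_single (⟨(m : ℕ) - (j : ℕ) - 1, by omega⟩ : Fin n)]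
    · rw [if_pos]; simp; omega
    · intro i _ hi
      rw [if_neg]
      intro hc; apply hi; apply Fin.ext; simp; omega
    · intro h'; exact absurd (Finset.mem_univ _) h'
  · apply Finset.sum_eq_zero
    intro i _
    rw [if_neg]; omega

lemma mul_single_left (n : ℕ) (i : Fin n) (y : Fin n → ℝ) (m : Fin n) :
    (filiformMul n (Pi.single i 1) y) m =
      if h : (i : ℕ) + 1 ≤ (m : ℕ) then y ⟨(m : ℕ) - (i : ℕ) - 1, by omega⟩ else 0 := by
  unfold filiformMul
  rw [Finset.sum_eq_single i]
  · have step : ∀ j' : Fin n, (if (i : ℕ) + (j' : ℕ) + 1 = (m : ℕ) then (Pi.single i 1 : Fin n → ℝ) i * y j' else 0)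
        = if (i : ℕ) + (j' : ℕ) + 1 = (m : ℕ) then y j' else 0 := by
      intro j'; simp [Pi.single_apply]
    simp only [step]
    split_ifs with h
    · rw [Finset.sum_eq_single (⟨(m : ℕ) - (i : ℕ) - 1, by omega⟩ : Fin n)]
      · rw [if_pos]; simp; omega
      · intro j' _ hj'
        rw [if_neg]; intro hc; apply hj'; apply Fin.ext; simp; omega
      · intro h'; exact absurd (Finset.mem_univ _) h'
    · apply Finset.sum_eq_zero
      intro j' _
      rw [if_neg]; omega
  · intro i' _ hi'
    apply Finset.sum_eq_zero
    intro j' _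
    simp [Pi.single_apply, hi']
  · intro h; exact absurd (Finset.mem_univ _) h

-- bilinearity of mul
lemma mul_sub_left (n : ℕ) (x z y : Fin n → ℝ) :
    filiformMul n (x - z) y = filiformMul n x y - filiformMul n z y := by
  funext k
  simp only [filiformMul, Pi.sub_apply, ← Finset.sum_sub_distrib]
  refine Finset.sum_congr rfl fun i _ => Finset.sum_congr rfl fun j _ => ?_
  split_ifs <;> ring

lemma mul_sub_right (n : ℕ) (x y z : Fin n → ℝ) :
    filiformMul n x (y - z) = filiformMul n x y - filiformMul n x z := by
  funext k
  simp only [filiformMul, Pi.sub_apply, ← Finset.sum_sub_distrib]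
  refine Finset.sum_congr rfl fun i _ => Finset.sum_congr rfl fun j _ => ?_
  split_ifs <;> ring

lemma mul_smul_left (n : ℕ) (c : ℝ) (x y : Fin n → ℝ) :
    filiformMul n (c • x) y = c • filiformMul n x y := by
  funext k
  simp only [filiformMul, Pi.smul_apply, smul_eq_mul, Finset.mul_sum]
  refine Finset.sum_congr rfl fun i _ => Finset.sum_congr rfl fun j _ => ?_
  split_ifs <;> ring

lemma mul_smul_right (n : ℕ) (c : ℝ) (x y : Fin n → ℝ) :
    filiformMul n x (c • y) = c • filiformMul n x y := by
  funext k
  simp only [filiformMul, Pi.smul_apply, smul_eq_mul, Finset.mul_sum]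
  refine Finset.sum_congr rfl fun i _ => Finset.sum_congr rfl fun j _ => ?_
  split_ifs <;> ring

-- linearity of form
lemma form_sub_left (n : ℕ) (x z y : Fin n → ℝ) :
    filiformForm n (x - z) y = filiformForm n x y - filiformForm n z y := by
  simp only [form_eq, Pi.sub_apply, ← Finset.sum_sub_distrib]
  exact Finset.sum_congr rfl fun i _ => by ring

lemma form_sub_right (n : ℕ) (x y z : Fin n → ℝ) :
    filiformForm n x (y - z) = filiformForm n x y - filiformForm n x z := by
  simp only [form_eq, Pi.sub_apply, ← Finset.sum_sub_distrib]
  exact Finset.sum_congr rfl fun i _ => by ring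

lemma form_smul_left (n : ℕ) (c : ℝ) (x y : Fin n → ℝ) :
    filiformForm n (c • x) y = c * filiformForm n x y := by
  simp only [form_eq, Pi.smul_apply, smul_eq_mul, Finset.mul_sum]
  exact Finset.sum_congr rfl fun i _ => by ring

lemma form_smul_right (n : ℕ) (c : ℝ) (x y : Fin n → ℝ) :
    filiformForm n x (c • y) = c * filiformForm n x y := by
  simp only [form_eq, Pi.smul_apply, smul_eq_mul, Finset.mul_sum]
  exact Finset.sum_congr rfl fun i _ => by ring

-- form with single
lemma form_single_left (n : ℕ) (i : Fin n) (y : Fin n → ℝ) :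
    filiformForm n (Pi.single i 1) y = y (Fin.rev i) := by
  rw [form_eq, Finset.sum_eq_single i]
  · simp
  · intro i' _ hi'; simp [Pi.single_apply, hi'.symm]
  · intro h; exact absurd (Finset.mem_univ _) h

lemma form_single_right (n : ℕ) (x : Fin n → ℝ) (j : Fin n) :
    filiformForm n x (Pi.single j 1) = x (Fin.rev j) := by
  rw [form_eq, Finset.sum_eq_single (Fin.rev j)]
  · rw [Fin.rev_rev]; simp
  · intro i' _ hi'
    have : Fin.rev i' ≠ j := fun h => hi' (by rw [← h, Fin.rev_rev])
    simp [Pi.single_apply, this]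
  · intro h; exact absurd (Finset.mem_univ _) h

lemma struct (n : ℕ) (hn : 0 < n) (B : (Fin n → ℝ) →ₗ[ℝ] (Fin n → ℝ))
    (hder : ∀ a b, B (filiformMul n a b) = filiformMul n (B a) b + filiformMul n a (B b)) :
    ∀ (K : ℕ) (hK : K < n) (m : Fin n),
      B (Pi.single ⟨K, hK⟩ 1) m =
        if h : K ≤ (m : ℕ) then ((K : ℝ) + 1) * B (Pi.single ⟨0, hn⟩ 1) ⟨(m : ℕ) - K, by omega⟩
        else 0 := by
  intro K
  induction K with
  | zero =>
    intro hK m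
    rw [dif_pos (Nat.zero_le _)]
    have : (⟨(m : ℕ) - 0, by omega⟩ : Fin n) = m := by apply Fin.ext; simp
    rw [this]
    norm_num
  | succ K ih =>
    intro hK m
    have hK' : K < n := by omega
    have hmul : filiformMul n (Pi.single ⟨0, hn⟩ 1) (Pi.single ⟨K, hK'⟩ 1)
        = Pi.single (⟨K + 1, hK⟩ : Fin n) 1 := by
      funext m'
      rw [mul_single_left]
      simp only [Pi.single_apply]
      split_ifs <;> first
        | rfl
        | (exfalso; simp only [Fin.ext_iff] at *; simp at *; omega)
    have key := congrFun (hder (Pi.single ⟨0, hn⟩ 1) (Pi.single ⟨K, hK'⟩ 1)) m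
    rw [hmul] at key
    rw [key, Pi.add_apply, mul_single_right, mul_single_left]
    have h0v : ((⟨0, hn⟩ : Fin n) : ℕ) = 0 := rfl
    have hKv : ((⟨K, hK'⟩ : Fin n) : ℕ) = K := rfl
    simp only [h0v, hKv]
    by_cases h : K + 1 ≤ (m : ℕ)
    · rw [dif_pos h, dif_pos (show (0:ℕ) + 1 ≤ (m:ℕ) by omega)]
      rw [ih hK' ⟨(m : ℕ) - 0 - 1, by omega⟩,
        dif_pos (show K ≤ ((⟨(m : ℕ) - 0 - 1, by omega⟩ : Fin n) : ℕ) from by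
          show K ≤ (m : ℕ) - 0 - 1; omega)]
      rw [show (⟨(m : ℕ) - K - 1, by omega⟩ : Fin n) = ⟨(m : ℕ) - (K + 1), by omega⟩ from
        Fin.ext (show (m : ℕ) - K - 1 = (m : ℕ) - (K + 1) by omega)]
      rw [show (⟨((⟨(m : ℕ) - 0 - 1, by omega⟩ : Fin n) : ℕ) - K, by omega⟩ : Fin n)
          = ⟨(m : ℕ) - (K + 1), by omega⟩ from
        Fin.ext (show (m : ℕ) - 0 - 1 - K = (m : ℕ) - (K + 1) by omega)]
      rw [dif_pos h]
      push_cast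
      ring
    · rw [dif_neg h]
      by_cases h0 : (0 : ℕ) + 1 ≤ (m : ℕ)
      · rw [dif_neg (show ¬ (K + 1 ≤ (m:ℕ)) from h), dif_pos h0,
          ih hK' ⟨(m : ℕ) - 0 - 1, by omega⟩,
          dif_neg (show ¬ K ≤ ((⟨(m : ℕ) - 0 - 1, by omega⟩ : Fin n) : ℕ) from by
            show ¬ K ≤ (m : ℕ) - 0 - 1; omega)]
        norm_num
      · rw [dif_neg (show ¬ (K + 1 ≤ (m:ℕ)) from h), dif_neg h0]
        norm_num

lemma iso_zero (n : ℕ) (hn : 0 < n) (B : (Fin n → ℝ) →ₗ[ℝ] (Fin n → ℝ))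
    (hder : ∀ a b, B (filiformMul n a b) = filiformMul n (B a) b + filiformMul n a (B b))
    (hiso : ∀ a b, filiformForm n (B a) b + filiformForm n a (B b) = 0) : B = 0 := by
  have hc : B (Pi.single (⟨0, hn⟩ : Fin n) 1) = 0 := by
    funext m
    have key := hiso (Pi.single (Fin.rev m) 1) (Pi.single (⟨0, hn⟩ : Fin n) 1)
    rw [form_single_right, form_single_left, Fin.rev_rev] at key
    have hs := struct n hn B hder ((Fin.rev m) : ℕ) (Fin.rev m).isLt (Fin.rev ⟨0, hn⟩)
    rw [Fin.eta] at hs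
    have hv1 : ((Fin.rev m : Fin n) : ℕ) = n - 1 - (m : ℕ) := by rw [Fin.val_rev]; omega
    have hv2 : ((Fin.rev (⟨0, hn⟩ : Fin n)) : ℕ) = n - 1 := by rw [Fin.val_rev]
    rw [dif_pos (show ((Fin.rev m : Fin n) : ℕ) ≤ ((Fin.rev (⟨0, hn⟩ : Fin n)) : ℕ) by
      rw [hv1, hv2]; omega)] at hs
    rw [show (⟨((Fin.rev (⟨0, hn⟩ : Fin n)) : ℕ) - ((Fin.rev m : Fin n) : ℕ),
          by exact lt_of_le_of_lt (Nat.sub_le _ _) (Fin.is_lt _)⟩ : Fin n) = m from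
      Fin.ext (show ((Fin.rev (⟨0, hn⟩ : Fin n)) : ℕ) - ((Fin.rev m : Fin n) : ℕ) = (m : ℕ) by
        rw [hv1, hv2]; have := m.isLt; omega)] at hs
    rw [hs] at key
    have hne : (((Fin.rev m : Fin n) : ℕ) : ℝ) + 2 ≠ 0 := by positivity
    have h2 : B (Pi.single (⟨0, hn⟩ : Fin n) 1) m * ((((Fin.rev m : Fin n) : ℕ) : ℝ) + 2) = 0 := by
      linear_combination key
    rcases mul_eq_zero.mp h2 with h | h
    · exact h
    · exact absurd h hne
  have hall : ∀ k : Fin n, B (Pi.single k 1) = 0 := by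
    intro k
    funext m
    have hs := struct n hn B hder (k : ℕ) k.isLt m
    rw [Fin.eta] at hs
    rw [hs]
    show _ = (0 : ℝ)
    split_ifs
    · rw [hc]; simp
    · rfl
  apply Module.Basis.ext (Pi.basisFun ℝ (Fin n))
  intro i
  have := hall i
  simp only [Pi.basisFun_apply, LinearMap.zero_apply]
  exact this

lemma B1_der (n : ℕ) (B1 : (Fin n → ℝ) →ₗ[ℝ] (Fin n → ℝ))
    (hB1 : ∀ x, B1 x = fun i : Fin n => ((i.1 : ℝ) + 1) * x i) :
    ∀ a b, B1 (filiformMul n a b) = filiformMul n (B1 a) b + filiformMul n a (B1 b) := by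
  intro a b
  funext k
  simp only [hB1, Pi.add_apply, filiformMul, Finset.mul_sum, ← Finset.sum_add_distrib]
  refine Finset.sum_congr rfl fun i _ => ?_
  refine Finset.sum_congr rfl fun j _ => ?_
  split_ifs with hP
  · have hk : ((i : ℕ) : ℝ) + ((j : ℕ) : ℝ) + 1 = ((k : ℕ) : ℝ) := by exact_mod_cast hP
    rw [← hk]; ring
  · ring

lemma B1_form (n : ℕ) (B1 : (Fin n → ℝ) →ₗ[ℝ] (Fin n → ℝ))
    (hB1 : ∀ x, B1 x = fun i : Fin n => ((i.1 : ℝ) + 1) * x i) :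
    ∀ a b, filiformForm n (B1 a) b + filiformForm n a (B1 b)
      = ((n : ℝ) + 1) * filiformForm n a b := by
  intro a b
  simp only [hB1, form_eq]
  rw [Finset.mul_sum, ← Finset.sum_add_distrib]
  refine Finset.sum_congr rfl fun i _ => ?_
  have hle : (i : ℕ) + 1 ≤ n := i.isLt
  rw [Fin.val_rev, Nat.cast_sub hle]
  push_cast
  ring

lemma gauss (n : ℕ) : ∑ i ∈ Finset.range n, ((i : ℝ) + 1) = n * (n + 1) / 2 := by
  induction n with
  | zero => simp
  | succ k ih => rw [Finset.sum_range_succ, ih]; push_cast; ring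

lemma B1_trace (n : ℕ) (B1 : (Fin n → ℝ) →ₗ[ℝ] (Fin n → ℝ))
    (hB1 : ∀ x, B1 x = fun i : Fin n => ((i.1 : ℝ) + 1) * x i) :
    LinearMap.trace ℝ (Fin n → ℝ) B1 = n * (n + 1) / 2 := by
  rw [LinearMap.trace_eq_matrix_trace ℝ (Pi.basisFun ℝ (Fin n)), Matrix.trace]
  have hdiag : ∀ i : Fin n, (LinearMap.toMatrix (Pi.basisFun ℝ (Fin n))
      (Pi.basisFun ℝ (Fin n)) B1) i i = ((i : ℕ) : ℝ) + 1 := by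
    intro i
    rw [LinearMap.toMatrix_apply, Pi.basisFun_repr, Pi.basisFun_apply, hB1]
    simp
  simp only [Matrix.diag_apply, hdiag]
  rw [Fin.sum_univ_eq_sum_range (fun i => ((i : ℕ) : ℝ) + 1), gauss]


theorem stmt_12 (n : ℕ) (hn : 1 ≤ n)
    (B1 : (Fin n → ℝ) →ₗ[ℝ] (Fin n → ℝ))
    (hB1 : ∀ x, B1 x = fun i : Fin n => ((i.1 : ℝ) + 1) * x i) :
    -- every infinitesimal-isometry derivation vanishes
    (∀ B : (Fin n → ℝ) →ₗ[ℝ] (Fin n → ℝ),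
      (∀ a b, B (filiformMul n a b) = filiformMul n (B a) b + filiformMul n a (B b)) →
      (∀ a b, filiformForm n (B a) b + filiformForm n a (B b) = 0) → B = 0) ∧
    -- B₁ is a nonzero infinitesimal-similarity derivation
    B1 ≠ 0 ∧
    (∀ a b, B1 (filiformMul n a b) = filiformMul n (B1 a) b + filiformMul n a (B1 b)) ∧
    (∀ a b, filiformForm n (B1 a) b + filiformForm n a (B1 b)
        = (2 * LinearMap.trace ℝ (Fin n → ℝ) B1 / n) * filiformForm n a b) ∧
    -- and it spans the space of infinitesimal-similarity derivations
    (∀ B : (Fin n → ℝ) →ₗ[ℝ] (Fin n → ℝ),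
      (∀ a b, B (filiformMul n a b) = filiformMul n (B a) b + filiformMul n a (B b)) →
      (∀ a b, filiformForm n (B a) b + filiformForm n a (B b)
          = (2 * LinearMap.trace ℝ (Fin n → ℝ) B / n) * filiformForm n a b) →
      ∃ c : ℝ, B = c • B1) := by
  have hn0 : (0 : ℕ) < n := hn
  have hnR : (n : ℝ) ≠ 0 := by positivity
  have htr : 2 * LinearMap.trace ℝ (Fin n → ℝ) B1 / n = (n : ℝ) + 1 := by
    rw [B1_trace n B1 hB1]
    field_simp
  refine ⟨iso_zero n hn0, ?_, B1_der n B1 hB1, ?_, ?_⟩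
  · intro h
    have h1 : B1 (Pi.single (⟨0, hn0⟩ : Fin n) 1) ⟨0, hn0⟩ = 0 := by rw [h]; rfl
    rw [hB1] at h1
    simp at h1
  · intro a b
    rw [htr]
    exact B1_form n B1 hB1 a b
  · intro B hder hsim
    set s : ℝ := 2 * LinearMap.trace ℝ (Fin n → ℝ) B / n with hs
    have hn1 : (n : ℝ) + 1 ≠ 0 := by positivity
    set c : ℝ := s / ((n : ℝ) + 1) with hcdef
    have hc : c * ((n : ℝ) + 1) = s := by
      rw [hcdef]; field_simp
    refine ⟨c, ?_⟩
    have hder1 := B1_der n B1 hB1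
    have hform1 := B1_form n B1 hB1
    have hzero : B - c • B1 = 0 := by
      apply iso_zero n hn0
      · intro a b
        simp only [LinearMap.sub_apply, LinearMap.smul_apply]
        rw [mul_sub_left, mul_sub_right, hder a b, hder1 a b,
          mul_smul_left, mul_smul_right]
        funext k
        simp only [Pi.sub_apply, Pi.add_apply, Pi.smul_apply, smul_eq_mul]
        ring
      · intro a b
        simp only [LinearMap.sub_apply, LinearMap.smul_apply]
        rw [form_sub_left, form_sub_right, form_smul_left, form_smul_right]
        linear_combination hsim a b - c * hform1 a b - filiformForm n a b * hc
    exact sub_eq_zero.mp hzero
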